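/- Let G be a finite directed graph whose nodes are each labeled max, min, average, or terminal, in which every non-terminal node has at least one out-arc and no max or min node has an out-arc ending at a terminal node. Let Q be a set of nodes of G containing no terminal node such that: every average node with at least one out-arc ending in Q or at a terminal node belongs to Q, and every max or min node all of whose out-arcs end in Q belongs to Q. Then for every non-terminal node w ∉ Q, the set R of all nodes reachable from w by directed paths none of whose nodes lie in Q (with w ∈ R) contains no terminal node, every average node in R has all of its out-arcs ending in R, every max and min node in R has at least one out-arc ending in R, and consequently R contains a bad subgraph of G. -/

import Mathlib

/-- The four kinds of nodes in a (simple stochastic) game graph. -/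
inductive NodeLabel : Type
  | max
  | min
  | avg
  | term
  deriving DecidableEq

/-- `BadSubgraph label A S`: `S` is a *bad subgraph* of the directed graph with arc
relation `A` and node labeling `label`, i.e. `S` is nonempty, every max node in `S` has
an out-arc ending in `S`, every min node in `S` has an out-arc ending in `S`, every
average node in `S` has all of its out-arcs ending in `S`, `S` contains no terminal
node, and `S` is strongly connected (via directed paths all of whose nodes lie in `S`). -/
def BadSubgraph {V : Type} (label : V → NodeLabel) (A : V → V → Prop) (S : Set V) : Prop :=
  S.Nonempty ∧
  (∀ v ∈ S, label v = NodeLabel.max → ∃ w ∈ S, A v w) ∧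
  (∀ v ∈ S, label v = NodeLabel.min → ∃ w ∈ S, A v w) ∧
  (∀ v ∈ S, label v = NodeLabel.avg → ∀ w, A v w → w ∈ S) ∧
  (∀ v ∈ S, label v ≠ NodeLabel.term) ∧
  (∀ u ∈ S, ∀ v ∈ S, Relation.ReflTransGen (fun a b => a ∈ S ∧ b ∈ S ∧ A a b) u v)

/-- Let `G` be a finite labeled directed graph in which terminal nodes
have no out-arcs, every non-terminal node has at least one out-arc, and no max or min
node has an out-arc ending at a terminal node. Let `Q` be a set of nodes containing no
terminal node such that every average node with at least one out-arc ending in `Q` or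
at a terminal node belongs to `Q`, and every max or min node all of whose out-arcs end
in `Q` belongs to `Q`. Then for every non-terminal node `w ∉ Q`, the set `R` of all
nodes reachable from `w` by directed paths avoiding `Q` contains no terminal node,
every average node in `R` has all of its out-arcs ending in `R`, every max and min node
in `R` has at least one out-arc ending in `R`, and `R` contains a bad subgraph. -/
theorem stmt6 {V : Type} [Fintype V] (label : V → NodeLabel) (A : V → V → Prop)
    (hterm_out : ∀ v, label v = NodeLabel.term → ∀ u, ¬ A v u)
    (hout : ∀ v, label v ≠ NodeLabel.term → ∃ u, A v u)
    (hmm_term : ∀ v, (label v = NodeLabel.max ∨ label v = NodeLabel.min) →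
      ∀ t, A v t → label t ≠ NodeLabel.term)
    (Q : Set V)
    (hQnt : ∀ q ∈ Q, label q ≠ NodeLabel.term)
    (hQa : ∀ v, label v = NodeLabel.avg →
      (∃ u, A v u ∧ (u ∈ Q ∨ label u = NodeLabel.term)) → v ∈ Q)
    (hQb : ∀ v, (label v = NodeLabel.max ∨ label v = NodeLabel.min) →
      (∀ u, A v u → u ∈ Q) → v ∈ Q)
    (w : V) (hw : label w ≠ NodeLabel.term) (hwQ : w ∉ Q) :
    let R : Set V := {v | Relation.ReflTransGen (fun a b => b ∉ Q ∧ A a b) w v}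
    (∀ r ∈ R, label r ≠ NodeLabel.term) ∧
    (∀ r ∈ R, label r = NodeLabel.avg → ∀ u, A r u → u ∈ R) ∧
    (∀ r ∈ R, (label r = NodeLabel.max ∨ label r = NodeLabel.min) → ∃ u ∈ R, A r u) ∧
    ∃ S ⊆ R, BadSubgraph label A S := by
  intro R
  classical
  have hRnQ : ∀ r ∈ R, r ∉ Q := by
    intro r hr
    induction hr with
    | refl => exact hwQ
    | tail h hab ih => exact hab.1
  have hRnt : ∀ r ∈ R, label r ≠ NodeLabel.term := by
    intro r hr
    induction hr with
    | refl => exact hw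
    | @tail b c h hab ih =>
      cases hl : label b with
      | term => exact absurd hl ih
      | avg =>
        intro hc
        exact hRnQ b h (hQa b hl ⟨c, hab.2, Or.inr hc⟩)
      | max => exact hmm_term b (Or.inl hl) c hab.2
      | min => exact hmm_term b (Or.inr hl) c hab.2
  have hRavg : ∀ r ∈ R, label r = NodeLabel.avg → ∀ u, A r u → u ∈ R := by
    intro r hr hl u hA
    have huQ : u ∉ Q := fun huQ => hRnQ r hr (hQa r hl ⟨u, hA, Or.inl huQ⟩)
    exact Relation.ReflTransGen.tail hr ⟨huQ, hA⟩
  have hRmm : ∀ r ∈ R, (label r = NodeLabel.max ∨ label r = NodeLabel.min) →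
      ∃ u ∈ R, A r u := by
    intro r hr hl
    by_contra hno
    push_neg at hno
    apply hRnQ r hr
    apply hQb r hl
    intro u hA
    by_contra huQ
    exact hno u (Relation.ReflTransGen.tail hr ⟨huQ, hA⟩) hA
  have hRsucc : ∀ r ∈ R, ∃ u ∈ R, A r u := by
    intro r hr
    cases hl : label r with
    | term => exact absurd hl (hRnt r hr)
    | max => exact hRmm r hr (Or.inl hl)
    | min => exact hRmm r hr (Or.inr hl)
    | avg =>
      obtain ⟨u, hA⟩ := hout r (hRnt r hr)
      exact ⟨u, hRavg r hr hl u hA, hA⟩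
  refine ⟨hRnt, hRavg, hRmm, ?_⟩
  -- find a minimal "trap" inside R
  set Trap : Set V → Prop := fun T => T.Nonempty ∧ T ⊆ R ∧
    (∀ v ∈ T, label v = NodeLabel.avg → ∀ u, A v u → u ∈ T) ∧
    (∀ v ∈ T, ∃ u ∈ T, A v u) with hTrapDef
  have hRtrap : Trap R := ⟨⟨w, Relation.ReflTransGen.refl⟩, subset_rfl, hRavg, hRsucc⟩
  obtain ⟨T, hT, hmin⟩ : ∃ T ∈ {T | Trap T}, ∀ T' ∈ {T | Trap T}, id T' ≤ id T → id T = id T' := by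
    obtain ⟨T, hT, hm⟩ := Set.Finite.exists_minimalFor id {T | Trap T} (Set.toFinite _) ⟨R, hRtrap⟩
    exact ⟨T, hT, fun T' hT' hle => le_antisymm (hm hT' hle) hle⟩
  obtain ⟨hTne, hTR, hTavg, hTsucc⟩ := hT
  have hconn : ∀ u ∈ T, ∀ v ∈ T,
      Relation.ReflTransGen (fun a b => a ∈ T ∧ b ∈ T ∧ A a b) u v := by
    intro u hu v hv
    set Re : Set V := {x | x ∈ T ∧
      Relation.ReflTransGen (fun a b => a ∈ T ∧ b ∈ T ∧ A a b) u x} with hReDef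
    have hReTrap : Trap Re := by
      refine ⟨⟨u, hu, Relation.ReflTransGen.refl⟩, fun x hx => hTR hx.1, ?_, ?_⟩
      · intro x hx hl s hA
        have hsT : s ∈ T := hTavg x hx.1 hl s hA
        exact ⟨hsT, hx.2.tail ⟨hx.1, hsT, hA⟩⟩
      · intro x hx
        obtain ⟨s, hsT, hA⟩ := hTsucc x hx.1
        exact ⟨s, ⟨hsT, hx.2.tail ⟨hx.1, hsT, hA⟩⟩, hA⟩
    have hReT : Re ⊆ T := fun x hx => hx.1
    have heq : Re = T := (hmin Re hReTrap hReT).symm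
    exact (heq ▸ hv : v ∈ Re).2
  refine ⟨T, hTR, hTne, ?_, ?_, hTavg, fun v hv => hRnt v (hTR hv), hconn⟩
  · intro v hv _; exact hTsucc v hv
  · intro v hv _; exact hTsucc v hv
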